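/- Let E be a graph and R a unital commutative ring. If (H,S) is an admissible pair in E, then the ideal I(H,S) of L_R(E) is a ring with a set of local units (a set of commuting idempotents U such that every x ∈ I(H,S) satisfies ux = xu = x for some u ∈ U). -/

import Mathlib

structure LPGraph where
  V : Type
  E : Type
  s : E → V
  r : E → V

namespace LPGraph

/-- `v ≥ w`: there is a directed path (possibly trivial) from `v` to `w`. -/
def Reaches (G : LPGraph) (v w : G.V) : Prop :=
  Relation.ReflTransGen (fun a b => ∃ e : G.E, G.s e = a ∧ G.r e = b) v w

def Hereditary (G : LPGraph) (X : Set G.V) : Prop :=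
  ∀ e : G.E, G.s e ∈ X → G.r e ∈ X

def Saturated (G : LPGraph) (X : Set G.V) : Prop :=
  ∀ v : G.V, {e : G.E | G.s e = v}.Finite → {e : G.E | G.s e = v}.Nonempty →
    (∀ e : G.E, G.s e = v → G.r e ∈ X) → v ∈ X

/-- The saturation of `X`: the smallest saturated subset containing `X`. -/
def saturation (G : LPGraph) (X : Set G.V) : Set G.V :=
  ⋂₀ {S : Set G.V | G.Saturated S ∧ X ⊆ S}

def tree (G : LPGraph) (v : G.V) : Set G.V := {w | G.Reaches v w}

def MT1 (G : LPGraph) (M : Set G.V) : Prop :=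
  ∀ v w : G.V, w ∈ M → G.Reaches v w → v ∈ M

def MT2 (G : LPGraph) (M : Set G.V) : Prop :=
  ∀ v ∈ M, {e : G.E | G.s e = v}.Finite → {e : G.E | G.s e = v}.Nonempty →
    ∃ e : G.E, G.s e = v ∧ G.r e ∈ M

def MT3on (G : LPGraph) (M : Set G.V) : Prop :=
  ∀ v ∈ M, ∀ w ∈ M, ∃ y ∈ M, G.Reaches v y ∧ G.Reaches w y

def MT3 (G : LPGraph) : Prop :=
  ∀ v w : G.V, ∃ y : G.V, G.Reaches v y ∧ G.Reaches w y

def Omega (G : LPGraph) (X : Set G.V) : Set G.V :=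
  {w | w ∉ X ∧ ∀ v ∈ X, ¬ G.Reaches w v}

def OmegaV (G : LPGraph) (v : G.V) : Set G.V :=
  {w | w ≠ v ∧ ¬ G.Reaches w v}

end LPGraph

namespace LPGraph

def IsBifurcation (G : LPGraph) (v : G.V) : Prop :=
  ∃ e f : G.E, e ≠ f ∧ G.s e = v ∧ G.s f = v

def IsPathList (G : LPGraph) (l : List G.E) : Prop :=
  l.Chain' (fun e f => G.r e = G.s f)

def IsClosedPath (G : LPGraph) (v : G.V) (l : List G.E) : Prop :=
  l ≠ [] ∧ G.IsPathList l ∧ (∀ e ∈ l.head?, G.s e = v) ∧ (∀ e ∈ l.getLast?, G.r e = v)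

def IsClosedSimplePath (G : LPGraph) (v : G.V) (l : List G.E) : Prop :=
  G.IsClosedPath v l ∧ ∀ e ∈ l.tail, G.s e ≠ v

def ConditionK (G : LPGraph) : Prop :=
  ∀ v : G.V, (¬ ∃ l : List G.E, G.IsClosedPath v l) ∨
    (∃ l₁ l₂ : List G.E, G.IsClosedSimplePath v l₁ ∧ G.IsClosedSimplePath v l₂ ∧ l₁ ≠ l₂)

def ConditionL (G : LPGraph) : Prop :=
  ∀ (v : G.V) (l : List G.E), G.IsClosedSimplePath v l →
    ∃ e ∈ l, ∃ f : G.E, f ≠ e ∧ G.s f = G.s e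

/-- `v` is a line point: no vertex in the tree of `v` is a bifurcation or the base of a
closed path. -/
def LinePoint (G : LPGraph) (v : G.V) : Prop :=
  ∀ w : G.V, G.Reaches v w →
    ¬ G.IsBifurcation w ∧ ¬ ∃ l : List G.E, G.IsClosedPath w l

/-- `B_H`: vertices outside `H` emitting infinitely many edges, but finitely many
(and at least one) into `E⁰ \ H`. -/
def BH (G : LPGraph) (H : Set G.V) : Set G.V :=
  {v | v ∉ H ∧ {e : G.E | G.s e = v}.Infinite ∧
    {e : G.E | G.s e = v ∧ G.r e ∉ H}.Finite ∧
    {e : G.E | G.s e = v ∧ G.r e ∉ H}.Nonempty}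

/-- An admissible pair: `H` hereditary saturated, `S ⊆ B_H`. -/
def Admissible (G : LPGraph) (H S : Set G.V) : Prop :=
  G.Hereditary H ∧ G.Saturated H ∧ S ⊆ G.BH H

/-- Finite paths in `G`, indexed by source and range. -/
inductive Path (G : LPGraph) : G.V → G.V → Type
  | nil (v : G.V) : Path G v v
  | cons (e : G.E) {w : G.V} (p : Path G (G.r e) w) : Path G (G.s e) w

def Path.length {G : LPGraph} : ∀ {v w : G.V}, Path G v w → ℕ
  | _, _, .nil _ => 0
  | _, _, .cons _ p => p.length + 1

/-- The path contains no bifurcations among the sources of its edges. -/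
def Path.NoBif {G : LPGraph} : ∀ {v w : G.V}, Path G v w → Prop
  | _, _, .nil _ => True
  | _, _, .cons e p => (∀ f : _, LPGraph.s _ f = LPGraph.s _ e → f = e) ∧ p.NoBif

end LPGraph

/-- Generators of the Leavitt path algebra: vertices, real edges and ghost edges. -/
inductive LGen (G : LPGraph) : Type
  | vertex : G.V → LGen G
  | edge : G.E → LGen G
  | ghost : G.E → LGen G

variable (R : Type) [CommRing R] (G : LPGraph)

noncomputable def fv (v : G.V) : FreeAlgebra R (LGen G) := FreeAlgebra.ι R (LGen.vertex v)
noncomputable def fe (e : G.E) : FreeAlgebra R (LGen G) := FreeAlgebra.ι R (LGen.edge e)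
noncomputable def fg (e : G.E) : FreeAlgebra R (LGen G) := FreeAlgebra.ι R (LGen.ghost e)

/-- The defining relations of the Leavitt path algebra. -/
inductive LRel : FreeAlgebra R (LGen G) → FreeAlgebra R (LGen G) → Prop
  | idem (v : G.V) : LRel (fv R G v * fv R G v) (fv R G v)
  | orth (v w : G.V) (h : v ≠ w) : LRel (fv R G v * fv R G w) 0
  | edge_src (e : G.E) : LRel (fv R G (G.s e) * fe R G e) (fe R G e)
  | edge_rng (e : G.E) : LRel (fe R G e * fv R G (G.r e)) (fe R G e)
  | ghost_rng (e : G.E) : LRel (fv R G (G.r e) * fg R G e) (fg R G e)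
  | ghost_src (e : G.E) : LRel (fg R G e * fv R G (G.s e)) (fg R G e)
  | ck1_same (e : G.E) : LRel (fg R G e * fe R G e) (fv R G (G.r e))
  | ck1_diff (e f : G.E) (h : e ≠ f) : LRel (fg R G e * fe R G f) 0
  | ck2 (v : G.V) (h1 : {e : G.E | G.s e = v}.Finite)
      (h2 : {e : G.E | G.s e = v}.Nonempty) :
      LRel (fv R G v) (∑ e ∈ h1.toFinset, fe R G e * fg R G e)

/-- The Leavitt path algebra `L_R(E)`. -/
abbrev LPA := RingQuot (LRel R G)

noncomputable def Xv (v : G.V) : LPA R G := RingQuot.mkAlgHom R (LRel R G) (fv R G v)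
noncomputable def Xe (e : G.E) : LPA R G := RingQuot.mkAlgHom R (LRel R G) (fe R G e)
noncomputable def Xg (e : G.E) : LPA R G := RingQuot.mkAlgHom R (LRel R G) (fg R G e)

open MulOpposite in
/-- The involution on `L_R(E)`, built from the universal property, sending
`v ↦ v`, `e ↦ e*`, `e* ↦ e` and reversing products. -/
noncomputable def preStar : FreeAlgebra R (LGen G) →ₐ[R] (LPA R G)ᵐᵒᵖ :=
  FreeAlgebra.lift R fun x => match x with
    | LGen.vertex v => op (Xv R G v)
    | LGen.edge e => op (Xg R G e)
    | LGen.ghost e => op (Xe R G e)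

section starlemmas

lemma Xv_mul_self (v : G.V) : Xv R G v * Xv R G v = Xv R G v := by
  simpa only [Xv, map_mul] using RingQuot.mkAlgHom_rel R (LRel.idem (R := R) (G := G) v)

lemma Xv_mul_Xv (v w : G.V) (h : v ≠ w) : Xv R G v * Xv R G w = 0 := by
  simpa only [Xv, map_mul, map_zero] using
    RingQuot.mkAlgHom_rel R (LRel.orth (R := R) (G := G) v w h)

lemma Xv_mul_Xe (e : G.E) : Xv R G (G.s e) * Xe R G e = Xe R G e := by
  simpa only [Xv, Xe, map_mul] using RingQuot.mkAlgHom_rel R (LRel.edge_src (R := R) (G := G) e)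

lemma Xe_mul_Xv (e : G.E) : Xe R G e * Xv R G (G.r e) = Xe R G e := by
  simpa only [Xv, Xe, map_mul] using RingQuot.mkAlgHom_rel R (LRel.edge_rng (R := R) (G := G) e)

lemma Xv_mul_Xg (e : G.E) : Xv R G (G.r e) * Xg R G e = Xg R G e := by
  simpa only [Xv, Xg, map_mul] using RingQuot.mkAlgHom_rel R (LRel.ghost_rng (R := R) (G := G) e)

lemma Xg_mul_Xv (e : G.E) : Xg R G e * Xv R G (G.s e) = Xg R G e := by
  simpa only [Xv, Xg, map_mul] using RingQuot.mkAlgHom_rel R (LRel.ghost_src (R := R) (G := G) e)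

lemma Xg_mul_Xe_same (e : G.E) : Xg R G e * Xe R G e = Xv R G (G.r e) := by
  simpa only [Xv, Xe, Xg, map_mul] using
    RingQuot.mkAlgHom_rel R (LRel.ck1_same (R := R) (G := G) e)

lemma Xg_mul_Xe_diff (e f : G.E) (h : e ≠ f) : Xg R G e * Xe R G f = 0 := by
  simpa only [Xe, Xg, map_mul, map_zero] using
    RingQuot.mkAlgHom_rel R (LRel.ck1_diff (R := R) (G := G) e f h)

lemma Xv_ck2 (v : G.V) (h1 : {e : G.E | G.s e = v}.Finite)
    (h2 : {e : G.E | G.s e = v}.Nonempty) :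
    Xv R G v = ∑ e ∈ h1.toFinset, Xe R G e * Xg R G e := by
  simpa only [Xv, Xe, Xg, map_mul, map_sum] using
    RingQuot.mkAlgHom_rel R (LRel.ck2 (R := R) (G := G) v h1 h2)

open MulOpposite in
lemma preStar_rel : ∀ ⦃a b : FreeAlgebra R (LGen G)⦄, LRel R G a b →
    preStar R G a = preStar R G b := by
  intro a b h
  induction h with
  | idem v =>
      simp only [map_mul, preStar, fv, FreeAlgebra.lift_ι_apply, ← op_mul]
      exact congrArg op (Xv_mul_self R G v)
  | orth v w h =>
      simp only [map_mul, map_zero, preStar, fv, FreeAlgebra.lift_ι_apply, ← op_mul]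
      rw [Xv_mul_Xv R G w v h.symm]; rfl
  | edge_src e =>
      simp only [map_mul, preStar, fv, fe, FreeAlgebra.lift_ι_apply, ← op_mul]
      exact congrArg op (Xg_mul_Xv R G e)
  | edge_rng e =>
      simp only [map_mul, preStar, fv, fe, FreeAlgebra.lift_ι_apply, ← op_mul]
      exact congrArg op (Xv_mul_Xg R G e)
  | ghost_rng e =>
      simp only [map_mul, preStar, fv, fg, FreeAlgebra.lift_ι_apply, ← op_mul]
      exact congrArg op (Xe_mul_Xv R G e)
  | ghost_src e =>
      simp only [map_mul, preStar, fv, fg, FreeAlgebra.lift_ι_apply, ← op_mul]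
      exact congrArg op (Xv_mul_Xe R G e)
  | ck1_same e =>
      simp only [map_mul, preStar, fv, fe, fg, FreeAlgebra.lift_ι_apply, ← op_mul]
      exact congrArg op (Xg_mul_Xe_same R G e)
  | ck1_diff e f h =>
      simp only [map_mul, map_zero, preStar, fe, fg, FreeAlgebra.lift_ι_apply, ← op_mul]
      rw [Xg_mul_Xe_diff R G f e h.symm]; rfl
  | ck2 v h1 h2 =>
      simp only [map_sum, map_mul, preStar, fv, fe, fg, FreeAlgebra.lift_ι_apply, ← op_mul,
        ← Finset.op_sum]
      exact congrArg op (Xv_ck2 R G v h1 h2)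

end starlemmas

open MulOpposite in
noncomputable def starHom : LPA R G →ₐ[R] (LPA R G)ᵐᵒᵖ :=
  RingQuot.liftAlgHom R ⟨preStar R G, preStar_rel R G⟩

/-- The canonical involution (`*`-operation) on `L_R(E)`. -/
noncomputable def lpaStar (x : LPA R G) : LPA R G := MulOpposite.unop (starHom R G x)

/-- The element of `L_R(E)` associated to a path (product of real edges;
a trivial path gives the vertex). -/
noncomputable def pathE : ∀ {v w : G.V}, G.Path v w → LPA R G
  | _, _, .nil v => Xv R G v
  | _, _, .cons e p => Xe R G e * pathE p

/-- The ghost element `α*` of `L_R(E)` associated to a path `α`. -/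
noncomputable def pathG : ∀ {v w : G.V}, G.Path v w → LPA R G
  | _, _, .nil v => Xv R G v
  | _, _, .cons e p => pathG p * Xg R G e

/-- The homogeneous lpaComponent of degree `k` of `L_R(E)`:
the `R`-span of elements `αβ*` with `|α| - |β| = k`. -/
noncomputable def lpaComponent (k : ℤ) : Submodule R (LPA R G) :=
  Submodule.span R {x : LPA R G |
    ∃ (v₁ v₂ w : G.V) (α : G.Path v₁ w) (β : G.Path v₂ w),
      (α.length : ℤ) - (β.length : ℤ) = k ∧ x = pathE R G α * pathG R G β}

/-- A two-sided ideal of `L_R(E)` is graded if each of its elements is an `R`-linear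
combination of homogeneous elements belonging to the ideal. -/
def IsGraded (I : TwoSidedIdeal (LPA R G)) : Prop :=
  ∀ x ∈ I, x ∈ Submodule.span R
    (⋃ k : ℤ, (I : Set (LPA R G)) ∩ (lpaComponent R G k : Set (LPA R G)))

/-- A basic ideal: `r • x ∈ I` with `r ≠ 0` implies `x ∈ I`, for `x` a vertex or an
element of the form `v - ∑ᵢ eᵢeᵢ*` with `s(eᵢ) = v`. -/
def IsBasic (I : TwoSidedIdeal (LPA R G)) : Prop :=
  (∀ (r : R) (v : G.V), r ≠ 0 → r • Xv R G v ∈ I → Xv R G v ∈ I) ∧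
  (∀ (r : R) (v : G.V) (F : Finset G.E), r ≠ 0 → (∀ e ∈ F, G.s e = v) →
    r • (Xv R G v - ∑ e ∈ F, Xe R G e * Xg R G e) ∈ I →
    (Xv R G v - ∑ e ∈ F, Xe R G e * Xg R G e) ∈ I)

/-- `v^H = v - ∑_{s(e)=v, r(e)∉H} ee*`. -/
noncomputable def vH (H : Set G.V) (v : G.V) : LPA R G :=
  Xv R G v - ∑ᶠ (e : G.E) (_ : G.s e = v ∧ G.r e ∉ H), Xe R G e * Xg R G e

/-- `I(H,S)`: the two-sided ideal generated by `{v : v ∈ H} ∪ {v^H : v ∈ S}`. -/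
noncomputable def IHS (H S : Set G.V) : TwoSidedIdeal (LPA R G) :=
  TwoSidedIdeal.span ((fun v => Xv R G v) '' H ∪ (fun v => vH R G H v) '' S)

/-- The quotient ring of `L_R(E)` by a two-sided ideal, as an `R`-algebra. -/
abbrev QuotLPA (I : TwoSidedIdeal (LPA R G)) := RingQuot (fun a b : LPA R G => a - b ∈ I)

/-- The quotient graph `E/(H,S)`. -/
def quotGraph (H S : Set G.V) (hH : G.Hereditary H) : LPGraph where
  V := {v : G.V // v ∉ H} ⊕ {v : G.V // v ∈ G.BH H ∧ v ∉ S}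
  E := {e : G.E // G.r e ∉ H} ⊕ {e : G.E // G.r e ∈ G.BH H ∧ G.r e ∉ S}
  s := fun x => match x with
    | Sum.inl e => Sum.inl ⟨G.s e.1, fun h => e.2 (hH e.1 h)⟩
    | Sum.inr e => Sum.inl ⟨G.s e.1, fun h => e.2.1.1 (hH e.1 h)⟩
  r := fun x => match x with
    | Sum.inl e => Sum.inl ⟨G.r e.1, e.2⟩
    | Sum.inr e => Sum.inr ⟨G.r e.1, e.2⟩

section LocalUnitsAux

variable (R : Type) [CommRing R] (G : LPGraph)

lemma Xv_mul_Xe_ne (w : G.V) (e : G.E) (h : w ≠ G.s e) : Xv R G w * Xe R G e = 0 := by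
  rw [← Xv_mul_Xe R G e, ← mul_assoc, Xv_mul_Xv R G _ _ h, zero_mul]

lemma Xe_mul_Xv_ne (e : G.E) (w : G.V) (h : G.r e ≠ w) : Xe R G e * Xv R G w = 0 := by
  rw [← Xe_mul_Xv R G e, mul_assoc, Xv_mul_Xv R G _ _ h, mul_zero]

lemma Xv_mul_Xg_ne (w : G.V) (e : G.E) (h : w ≠ G.r e) : Xv R G w * Xg R G e = 0 := by
  rw [← Xv_mul_Xg R G e, ← mul_assoc, Xv_mul_Xv R G _ _ h, zero_mul]

lemma Xg_mul_Xv_ne (e : G.E) (w : G.V) (h : G.s e ≠ w) : Xg R G e * Xv R G w = 0 := by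
  rw [← Xg_mul_Xv R G e, mul_assoc, Xv_mul_Xv R G _ _ h, mul_zero]

lemma Xv_mul_pathE {a b : G.V} (p : G.Path a b) :
    Xv R G a * pathE R G p = pathE R G p := by
  induction p with
  | nil v => exact Xv_mul_self R G v
  | cons e p ih => simp only [pathE]; rw [← mul_assoc, Xv_mul_Xe]

lemma pathE_mul_Xv {a b : G.V} (p : G.Path a b) :
    pathE R G p * Xv R G b = pathE R G p := by
  induction p with
  | nil v => exact Xv_mul_self R G v
  | cons e p ih => simp only [pathE]; rw [mul_assoc, ih]

lemma Xv_mul_pathG {a b : G.V} (p : G.Path a b) :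
    Xv R G b * pathG R G p = pathG R G p := by
  induction p with
  | nil v => exact Xv_mul_self R G v
  | cons e p ih => simp only [pathG]; rw [← mul_assoc, ih]

lemma pathG_mul_Xv {a b : G.V} (p : G.Path a b) :
    pathG R G p * Xv R G a = pathG R G p := by
  induction p with
  | nil v => exact Xv_mul_self R G v
  | cons e p ih => simp only [pathG]; rw [mul_assoc, Xg_mul_Xv]

lemma Xv_mul_pathE_ne {a b : G.V} (p : G.Path a b) (w : G.V) (h : w ≠ a) :
    Xv R G w * pathE R G p = 0 := by
  rw [← Xv_mul_pathE R G p, ← mul_assoc, Xv_mul_Xv R G _ _ h, zero_mul]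

lemma pathE_mul_Xv_ne {a b : G.V} (p : G.Path a b) (w : G.V) (h : b ≠ w) :
    pathE R G p * Xv R G w = 0 := by
  rw [← pathE_mul_Xv R G p, mul_assoc, Xv_mul_Xv R G _ _ h, mul_zero]

lemma Xv_mul_pathG_ne {a b : G.V} (p : G.Path a b) (w : G.V) (h : w ≠ b) :
    Xv R G w * pathG R G p = 0 := by
  rw [← Xv_mul_pathG R G p, ← mul_assoc, Xv_mul_Xv R G _ _ h, zero_mul]

lemma pathG_mul_Xv_ne {a b : G.V} (p : G.Path a b) (w : G.V) (h : a ≠ w) :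
    pathG R G p * Xv R G w = 0 := by
  rw [← pathG_mul_Xv R G p, mul_assoc, Xv_mul_Xv R G _ _ h, mul_zero]

lemma Xe_mul_pathE_ne (e : G.E) {a b : G.V} (p : G.Path a b) (h : G.r e ≠ a) :
    Xe R G e * pathE R G p = 0 := by
  rw [← Xv_mul_pathE R G p, ← mul_assoc, Xe_mul_Xv_ne R G e a h, zero_mul]

lemma pathG_mul_Xg_ne {a b : G.V} (p : G.Path a b) (e : G.E) (h : a ≠ G.r e) :
    pathG R G p * Xg R G e = 0 := by
  rw [← pathG_mul_Xv R G p, mul_assoc, Xv_mul_Xg_ne R G a e h, mul_zero]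

lemma pathG_mul_pathE {a b : G.V} (p : G.Path a b) :
    pathG R G p * pathE R G p = Xv R G b := by
  induction p with
  | nil v => exact Xv_mul_self R G v
  | cons e p ih =>
      simp only [pathG, pathE]
      rw [mul_assoc, ← mul_assoc (Xg R G e), Xg_mul_Xe_same, Xv_mul_pathE, ih]

def pconcat {G : LPGraph} : {a b : G.V} → (p : G.Path a b) → (e : G.E) → G.s e = b →
    G.Path a (G.r e)
  | _, _, .nil _, e, h => h ▸ LPGraph.Path.cons e (LPGraph.Path.nil (G.r e))
  | _, _, .cons f p, e, h => LPGraph.Path.cons f (pconcat p e h)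

lemma pathE_pconcat {a b : G.V} (p : G.Path a b) (e : G.E) (h : G.s e = b) :
    pathE R G (pconcat p e h) = pathE R G p * Xe R G e := by
  induction p with
  | nil v =>
      subst h
      show pathE R G (LPGraph.Path.cons e (LPGraph.Path.nil (G.r e))) = _
      simp only [pathE]
      rw [Xe_mul_Xv, Xv_mul_Xe]
  | cons f p ih =>
      show pathE R G (LPGraph.Path.cons f (pconcat p e h)) = _
      simp only [pathE]
      rw [ih, mul_assoc]

lemma pathG_pconcat {a b : G.V} (p : G.Path a b) (e : G.E) (h : G.s e = b) :
    pathG R G (pconcat p e h) = Xg R G e * pathG R G p := by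
  induction p with
  | nil v =>
      subst h
      show pathG R G (LPGraph.Path.cons e (LPGraph.Path.nil (G.r e))) = _
      simp only [pathG]
      rw [Xv_mul_Xg, Xg_mul_Xv]
  | cons f p ih =>
      show pathG R G (LPGraph.Path.cons f (pconcat p e h)) = _
      simp only [pathG]
      rw [ih, mul_assoc]

end LocalUnitsAux
section MidAux

variable (R : Type) [CommRing R] (G : LPGraph) (H S : Set G.V)

/-- `c` is an admissible "middle" idempotent based at `v`. -/
def IsMid (c : LPA R G) (v : G.V) : Prop :=
  (v ∈ H ∧ c = Xv R G v) ∨ (v ∈ S ∧ c = vH R G H v)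

lemma Xg_mul_Xv' (e : G.E) (w : G.V) (h : G.s e = w) :
    Xg R G e * Xv R G w = Xg R G e := by subst h; exact Xg_mul_Xv R G e

lemma Xv_mul_Xe' (e : G.E) (w : G.V) (h : G.s e = w) :
    Xv R G w * Xe R G e = Xe R G e := by subst h; exact Xv_mul_Xe R G e

lemma vH_eq (v : G.V) (hfin : {e : G.E | G.s e = v ∧ G.r e ∉ H}.Finite) :
    vH R G H v = Xv R G v - ∑ e ∈ hfin.toFinset, Xe R G e * Xg R G e := by
  unfold vH
  congr 1
  exact finsum_mem_eq_finite_toFinset_sum _ hfin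

lemma Xv_mul_vH {v : G.V} (hfin : {e : G.E | G.s e = v ∧ G.r e ∉ H}.Finite) :
    Xv R G v * vH R G H v = vH R G H v := by
  rw [vH_eq R G H v hfin, mul_sub, Xv_mul_self, Finset.mul_sum]
  congr 1
  refine Finset.sum_congr rfl fun f hf => ?_
  rw [← mul_assoc, ← (hfin.mem_toFinset.mp hf).1, Xv_mul_Xe]

lemma vH_mul_Xv {v : G.V} (hfin : {e : G.E | G.s e = v ∧ G.r e ∉ H}.Finite) :
    vH R G H v * Xv R G v = vH R G H v := by
  rw [vH_eq R G H v hfin, sub_mul, Xv_mul_self, Finset.sum_mul]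
  congr 1
  refine Finset.sum_congr rfl fun f hf => ?_
  rw [mul_assoc, ← (hfin.mem_toFinset.mp hf).1, Xg_mul_Xv]

lemma Xg_mul_vH_of_mem {v : G.V} (hfin : {e : G.E | G.s e = v ∧ G.r e ∉ H}.Finite)
    (e : G.E) (h1 : G.s e = v) (h2 : G.r e ∈ H) :
    Xg R G e * vH R G H v = Xg R G e := by
  rw [vH_eq R G H v hfin, mul_sub, Xg_mul_Xv' R G e v h1]
  rw [Finset.mul_sum, Finset.sum_eq_zero, sub_zero]
  intro f hf
  have hf' := hfin.mem_toFinset.mp hf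
  have hne : e ≠ f := fun hef => hf'.2 (hef ▸ h2)
  rw [← mul_assoc, Xg_mul_Xe_diff R G e f hne, zero_mul]

lemma Xg_mul_vH_zero {v : G.V} (hfin : {e : G.E | G.s e = v ∧ G.r e ∉ H}.Finite)
    (e : G.E) (h : ¬ (G.s e = v ∧ G.r e ∈ H)) :
    Xg R G e * vH R G H v = 0 := by
  rw [vH_eq R G H v hfin, mul_sub, Finset.mul_sum]
  by_cases h1 : G.s e = v
  · have h2 : G.r e ∉ H := fun hr => h ⟨h1, hr⟩
    have he : e ∈ hfin.toFinset := hfin.mem_toFinset.mpr ⟨h1, h2⟩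
    rw [Finset.sum_eq_single_of_mem e he]
    · rw [← mul_assoc, Xg_mul_Xe_same, Xg_mul_Xv' R G e v h1, Xv_mul_Xg, sub_self]
    · intro f hf hneq
      rw [← mul_assoc, Xg_mul_Xe_diff R G e f (Ne.symm hneq), zero_mul]
  · rw [Xg_mul_Xv_ne R G e v h1, Finset.sum_eq_zero, sub_zero]
    intro f hf
    have hf' := hfin.mem_toFinset.mp hf
    have hne : e ≠ f := fun hef => h1 (hef ▸ hf'.1)
    rw [← mul_assoc, Xg_mul_Xe_diff R G e f hne, zero_mul]

lemma vH_mul_Xe_of_mem {v : G.V} (hfin : {e : G.E | G.s e = v ∧ G.r e ∉ H}.Finite)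
    (e : G.E) (h1 : G.s e = v) (h2 : G.r e ∈ H) :
    vH R G H v * Xe R G e = Xe R G e := by
  rw [vH_eq R G H v hfin, sub_mul, Xv_mul_Xe' R G e v h1]
  rw [Finset.sum_mul, Finset.sum_eq_zero, sub_zero]
  intro f hf
  have hf' := hfin.mem_toFinset.mp hf
  have hne : f ≠ e := fun hef => hf'.2 (hef ▸ h2)
  rw [mul_assoc, Xg_mul_Xe_diff R G f e hne, mul_zero]

lemma vH_mul_Xe_zero {v : G.V} (hfin : {e : G.E | G.s e = v ∧ G.r e ∉ H}.Finite)
    (e : G.E) (h : ¬ (G.s e = v ∧ G.r e ∈ H)) :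
    vH R G H v * Xe R G e = 0 := by
  rw [vH_eq R G H v hfin, sub_mul, Finset.sum_mul]
  by_cases h1 : G.s e = v
  · have h2 : G.r e ∉ H := fun hr => h ⟨h1, hr⟩
    have he : e ∈ hfin.toFinset := hfin.mem_toFinset.mpr ⟨h1, h2⟩
    rw [Finset.sum_eq_single_of_mem e he]
    · rw [mul_assoc, Xg_mul_Xe_same, Xe_mul_Xv, Xv_mul_Xe' R G e v h1, sub_self]
    · intro f hf hneq
      rw [mul_assoc, Xg_mul_Xe_diff R G f e hneq, mul_zero]
  · rw [Xv_mul_Xe_ne R G v e (fun hh => h1 hh.symm), Finset.sum_eq_zero, sub_zero]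
    intro f hf
    have hf' := hfin.mem_toFinset.mp hf
    have hne : f ≠ e := fun hef => h1 (hef ▸ hf'.1)
    rw [mul_assoc, Xg_mul_Xe_diff R G f e hne, mul_zero]

lemma vH_idem {v : G.V} (hfin : {e : G.E | G.s e = v ∧ G.r e ∉ H}.Finite) :
    vH R G H v * vH R G H v = vH R G H v := by
  nth_rewrite 1 [vH_eq R G H v hfin]
  rw [sub_mul, Xv_mul_vH R G H hfin, Finset.sum_mul, Finset.sum_eq_zero, sub_zero]
  intro f hf
  have hf' := hfin.mem_toFinset.mp hf
  rw [mul_assoc, Xg_mul_vH_zero R G H hfin f (fun hh => hf'.2 hh.2), mul_zero]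

/-! Combined mid lemmas. -/

lemma mid_Xv_left (hAdm : G.Admissible H S) {c : LPA R G} {v : G.V} (hc : IsMid R G H S c v) :
    Xv R G v * c = c := by
  rcases hc with ⟨_, rfl⟩ | ⟨hv, rfl⟩
  · exact Xv_mul_self R G v
  · exact Xv_mul_vH R G H ((hAdm.2.2 hv).2.2.1)

lemma mid_Xv_right (hAdm : G.Admissible H S) {c : LPA R G} {v : G.V} (hc : IsMid R G H S c v) :
    c * Xv R G v = c := by
  rcases hc with ⟨_, rfl⟩ | ⟨hv, rfl⟩
  · exact Xv_mul_self R G v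
  · exact vH_mul_Xv R G H ((hAdm.2.2 hv).2.2.1)

lemma mid_idem (hAdm : G.Admissible H S) {c : LPA R G} {v : G.V} (hc : IsMid R G H S c v) :
    c * c = c := by
  rcases hc with ⟨_, rfl⟩ | ⟨hv, rfl⟩
  · exact Xv_mul_self R G v
  · exact vH_idem R G H ((hAdm.2.2 hv).2.2.1)

lemma mid_mem_IHS {c : LPA R G} {v : G.V} (hc : IsMid R G H S c v) :
    c ∈ IHS R G H S := by
  rcases hc with ⟨hv, rfl⟩ | ⟨hv, rfl⟩
  · exact TwoSidedIdeal.subset_span (Set.mem_union_left _ ⟨v, hv, rfl⟩)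
  · exact TwoSidedIdeal.subset_span (Set.mem_union_right _ ⟨v, hv, rfl⟩)

/-- Ghost edge hitting a mid idempotent from the left. -/
lemma Xg_mul_mid_of_mem (hAdm : G.Admissible H S) {c : LPA R G} {v : G.V} (hc : IsMid R G H S c v)
    (e : G.E) (h1 : G.s e = v) (h2 : G.r e ∈ H) :
    Xg R G e * c = Xg R G e := by
  rcases hc with ⟨_, rfl⟩ | ⟨hv, rfl⟩
  · exact Xg_mul_Xv' R G e v h1
  · exact Xg_mul_vH_of_mem R G H ((hAdm.2.2 hv).2.2.1) e h1 h2

lemma Xg_mul_mid_zero (hAdm : G.Admissible H S) {c : LPA R G} {v : G.V} (hc : IsMid R G H S c v)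
    (e : G.E) (h : ¬ (G.s e = v ∧ G.r e ∈ H)) :
    Xg R G e * c = 0 := by
  rcases hc with ⟨hv, rfl⟩ | ⟨hv, rfl⟩
  · refine Xg_mul_Xv_ne R G e v fun h1 => h ⟨h1, ?_⟩
    exact hAdm.1 e (h1 ▸ hv)
  · exact Xg_mul_vH_zero R G H ((hAdm.2.2 hv).2.2.1) e h

lemma mid_mul_Xe_of_mem (hAdm : G.Admissible H S) {c : LPA R G} {v : G.V} (hc : IsMid R G H S c v)
    (e : G.E) (h1 : G.s e = v) (h2 : G.r e ∈ H) :
    c * Xe R G e = Xe R G e := by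
  rcases hc with ⟨_, rfl⟩ | ⟨hv, rfl⟩
  · exact Xv_mul_Xe' R G e v h1
  · exact vH_mul_Xe_of_mem R G H ((hAdm.2.2 hv).2.2.1) e h1 h2

lemma mid_mul_Xe_zero (hAdm : G.Admissible H S) {c : LPA R G} {v : G.V} (hc : IsMid R G H S c v)
    (e : G.E) (h : ¬ (G.s e = v ∧ G.r e ∈ H)) :
    c * Xe R G e = 0 := by
  rcases hc with ⟨hv, rfl⟩ | ⟨hv, rfl⟩
  · refine Xv_mul_Xe_ne R G v e fun h1 => h ⟨h1.symm, ?_⟩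
    exact hAdm.1 e (h1.symm ▸ hv)
  · exact vH_mul_Xe_zero R G H ((hAdm.2.2 hv).2.2.1) e h

/-- Two mid idempotents based at different vertices are orthogonal. -/
lemma mid_orth (hAdm : G.Admissible H S) {c c' : LPA R G} {v w : G.V} (hc : IsMid R G H S c v)
    (hc' : IsMid R G H S c' w) (hvw : v ≠ w) : c * c' = 0 := by
  rw [← mid_Xv_right R G H S hAdm hc, ← mid_Xv_left R G H S hAdm hc',
    mul_assoc, ← mul_assoc (Xv R G v), Xv_mul_Xv R G _ _ hvw, zero_mul, mul_zero]

/-- Two mid idempotents based at the same vertex are equal. -/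
lemma mid_unique (hAdm : G.Admissible H S) {c c' : LPA R G} {v : G.V} (hc : IsMid R G H S c v)
    (hc' : IsMid R G H S c' v) : c = c' := by
  rcases hc with ⟨hv, rfl⟩ | ⟨hv, rfl⟩ <;> rcases hc' with ⟨hv', rfl⟩ | ⟨hv', rfl⟩
  · rfl
  · exact absurd hv (hAdm.2.2 hv').1
  · exact absurd hv' (hAdm.2.2 hv).1
  · rfl

end MidAux
section EFamAux

variable (R : Type) [CommRing R] (G : LPGraph) (H S : Set G.V)

noncomputable def eGamma {a v : G.V} (γ : G.Path a v) (c : LPA R G) : LPA R G :=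
  pathE R G γ * (c * pathG R G γ)

lemma eGamma_nil (hAdm : G.Admissible H S) (v : G.V) (c : LPA R G)
    (hc : IsMid R G H S c v) : eGamma R G (LPGraph.Path.nil v) c = c := by
  show Xv R G v * (c * Xv R G v) = c
  rw [mid_Xv_right R G H S hAdm hc, mid_Xv_left R G H S hAdm hc]

lemma eGamma_cons (e : G.E) {w : G.V} (γ : G.Path (G.r e) w) (c : LPA R G) :
    eGamma R G (LPGraph.Path.cons e γ) c = Xe R G e * (eGamma R G γ c * Xg R G e) := by
  simp only [eGamma, pathE, pathG, mul_assoc]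

lemma eGamma_mul_Xv {a v : G.V} (γ : G.Path a v) (c : LPA R G) :
    eGamma R G γ c * Xv R G a = eGamma R G γ c := by
  simp only [eGamma, mul_assoc, pathG_mul_Xv]

lemma Xv_mul_eGamma {a v : G.V} (γ : G.Path a v) (c : LPA R G) :
    Xv R G a * eGamma R G γ c = eGamma R G γ c := by
  rw [eGamma, ← mul_assoc, Xv_mul_pathE]

lemma lpaConjMul (e : G.E) (x y : LPA R G) (hy : Xv R G (G.r e) * y = y) :
    (Xe R G e * (x * Xg R G e)) * (Xe R G e * (y * Xg R G e))
      = Xe R G e * ((x * y) * Xg R G e) := by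
  simp only [mul_assoc]
  rw [← mul_assoc (Xg R G e), Xg_mul_Xe_same, ← mul_assoc (Xv R G (G.r e)), hy]

lemma lpaConjOrth (e f : G.E) (hef : e ≠ f) (x y : LPA R G) :
    (Xe R G e * (x * Xg R G e)) * (Xe R G f * (y * Xg R G f)) = 0 := by
  simp only [mul_assoc]
  rw [← mul_assoc (Xg R G e), Xg_mul_Xe_diff R G e f hef, zero_mul, mul_zero, mul_zero]

lemma eGamma_idem (hAdm : G.Admissible H S) {a v : G.V} (γ : G.Path a v)
    (c : LPA R G) (hc : IsMid R G H S c v) :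
    eGamma R G γ c * eGamma R G γ c = eGamma R G γ c := by
  induction γ with
  | nil w => rw [eGamma_nil R G H S hAdm w c hc]; exact mid_idem R G H S hAdm hc
  | cons e γ ih =>
      rw [eGamma_cons, lpaConjMul R G e _ _ (Xv_mul_eGamma R G γ c), ih hc]

lemma mid_comm_eGamma (hAdm : G.Admissible H S) {w : G.V} {c : LPA R G}
    (hc : IsMid R G H S c w) {a v : G.V} (γ : G.Path a v) {c' : LPA R G}
    (hc' : IsMid R G H S c' v) :
    c * eGamma R G γ c' = eGamma R G γ c' * c := by
  induction γ with
  | nil u =>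
      rw [eGamma_nil R G H S hAdm u c' hc']
      by_cases h : w = u
      · subst h; rw [mid_unique R G H S hAdm hc hc']
      · rw [mid_orth R G H S hAdm hc hc' h, mid_orth R G H S hAdm hc' hc (Ne.symm h)]
  | cons e γ ih =>
      rw [eGamma_cons]
      by_cases h : G.s e = w ∧ G.r e ∈ H
      · rw [← mul_assoc, mid_mul_Xe_of_mem R G H S hAdm hc e h.1 h.2]
        conv_rhs => rw [mul_assoc, mul_assoc, Xg_mul_mid_of_mem R G H S hAdm hc e h.1 h.2]
      · rw [← mul_assoc, mid_mul_Xe_zero R G H S hAdm hc e h, zero_mul]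
        conv_rhs => rw [mul_assoc, mul_assoc, Xg_mul_mid_zero R G H S hAdm hc e h,
          mul_zero, mul_zero]

lemma eGamma_comm (hAdm : G.Admissible H S) :
    ∀ {a v : G.V} (γ : G.Path a v) {c : LPA R G}, IsMid R G H S c v →
    ∀ {b w : G.V} (δ : G.Path b w) {c' : LPA R G}, IsMid R G H S c' w →
    eGamma R G γ c * eGamma R G δ c' = eGamma R G δ c' * eGamma R G γ c := by
  intro a v γ
  induction γ with
  | nil u =>
      intro c hc b w δ c' hc'
      rw [eGamma_nil R G H S hAdm u c hc]
      exact mid_comm_eGamma R G H S hAdm hc δ hc'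
  | cons e γ ih =>
      intro c hc b w δ c' hc'
      cases δ with
      | nil u =>
          rw [eGamma_nil R G H S hAdm _ c' hc']
          exact (mid_comm_eGamma R G H S hAdm hc' (LPGraph.Path.cons e γ) hc).symm
      | cons f δ =>
          by_cases hef : e = f
          · subst hef
            rw [eGamma_cons, eGamma_cons, lpaConjMul R G e _ _ (Xv_mul_eGamma R G δ c'),
              lpaConjMul R G e _ _ (Xv_mul_eGamma R G γ c), ih hc δ hc']
          · rw [eGamma_cons, eGamma_cons, lpaConjOrth R G e f hef,
              lpaConjOrth R G f e (Ne.symm hef)]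

/-- The commuting family of idempotents. -/
def EFam : Set (LPA R G) :=
  {x | ∃ (a v : G.V) (γ : G.Path a v) (c : LPA R G),
    IsMid R G H S c v ∧ x = eGamma R G γ c}

/-- The spanning set of `I(H,S)`. -/
def TSet : Set (LPA R G) :=
  {x | ∃ (a b v : G.V) (α : G.Path a v) (β : G.Path b v) (c : LPA R G),
    IsMid R G H S c v ∧ x = pathE R G α * (c * pathG R G β)}

lemma efam_mem_IHS {x : LPA R G} (hx : x ∈ EFam R G H S) : x ∈ IHS R G H S := by
  obtain ⟨a, v, γ, c, hc, rfl⟩ := hx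
  exact TwoSidedIdeal.mul_mem_left _ _ _
    (TwoSidedIdeal.mul_mem_right _ _ _ (mid_mem_IHS R G H S hc))

lemma efam_idem (hAdm : G.Admissible H S) {x : LPA R G} (hx : x ∈ EFam R G H S) :
    x * x = x := by
  obtain ⟨a, v, γ, c, hc, rfl⟩ := hx
  exact eGamma_idem R G H S hAdm γ c hc

lemma efam_commute (hAdm : G.Admissible H S) {x y : LPA R G}
    (hx : x ∈ EFam R G H S) (hy : y ∈ EFam R G H S) : Commute x y := by
  obtain ⟨a, v, γ, c, hc, rfl⟩ := hx
  obtain ⟨b, w, δ, c', hc', rfl⟩ := hy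
  exact eGamma_comm R G H S hAdm γ hc δ hc'

lemma eGamma_absorb_left (hAdm : G.Admissible H S) {a b v : G.V}
    (α : G.Path a v) (β : G.Path b v) {c : LPA R G} (hc : IsMid R G H S c v) :
    eGamma R G α c * (pathE R G α * (c * pathG R G β)) = pathE R G α * (c * pathG R G β) := by
  unfold eGamma
  simp only [mul_assoc]
  rw [← mul_assoc (pathG R G α), pathG_mul_pathE, ← mul_assoc (Xv R G v),
    mid_Xv_left R G H S hAdm hc, ← mul_assoc c c, mid_idem R G H S hAdm hc]

lemma eGamma_absorb_right (hAdm : G.Admissible H S) {a b v : G.V}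
    (α : G.Path a v) (β : G.Path b v) {c : LPA R G} (hc : IsMid R G H S c v) :
    (pathE R G α * (c * pathG R G β)) * eGamma R G β c = pathE R G α * (c * pathG R G β) := by
  unfold eGamma
  simp only [mul_assoc]
  rw [← mul_assoc (pathG R G β) (pathE R G β), pathG_mul_pathE, ← mul_assoc (Xv R G v),
    mid_Xv_left R G H S hAdm hc, ← mul_assoc c c, mid_idem R G H S hAdm hc]

end EFamAux
section SpanAux

variable (R : Type) [CommRing R] (G : LPGraph) (H S : Set G.V)

lemma Xv_mul_TSet (w : G.V) {t : LPA R G} (ht : t ∈ TSet R G H S) :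
    Xv R G w * t ∈ Submodule.span R (TSet R G H S) := by
  obtain ⟨a, b, v, α, β, c, hc, rfl⟩ := ht
  by_cases h : w = a
  · subst h
    rw [← mul_assoc, Xv_mul_pathE]
    exact Submodule.subset_span ⟨_, _, _, α, β, c, hc, rfl⟩
  · rw [← mul_assoc, Xv_mul_pathE_ne R G α w h, zero_mul]
    exact Submodule.zero_mem _

lemma Xe_mul_TSet (e : G.E) {t : LPA R G} (ht : t ∈ TSet R G H S) :
    Xe R G e * t ∈ Submodule.span R (TSet R G H S) := by
  obtain ⟨a, b, v, α, β, c, hc, rfl⟩ := ht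
  by_cases h : G.r e = a
  · subst h
    refine Submodule.subset_span ⟨G.s e, b, v, LPGraph.Path.cons e α, β, c, hc, ?_⟩
    simp only [pathE, mul_assoc]
  · rw [← mul_assoc, Xe_mul_pathE_ne R G e α h, zero_mul]
    exact Submodule.zero_mem _

lemma Xg_mul_TSet_aux (hAdm : G.Admissible H S) (e : G.E) {b v : G.V}
    (β : G.Path b v) {c : LPA R G} (hc : IsMid R G H S c v) :
    Xg R G e * (c * pathG R G β) ∈ Submodule.span R (TSet R G H S) := by
  by_cases h : G.s e = v ∧ G.r e ∈ H
  · have key : Xg R G e * (c * pathG R G β)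
        = pathE R G (LPGraph.Path.nil (G.r e)) *
          (Xv R G (G.r e) * pathG R G (pconcat β e h.1)) := by
      rw [← mul_assoc, Xg_mul_mid_of_mem R G H S hAdm hc e h.1 h.2, pathG_pconcat]
      show Xg R G e * pathG R G β
        = Xv R G (G.r e) * (Xv R G (G.r e) * (Xg R G e * pathG R G β))
      rw [← mul_assoc (Xv R G (G.r e)) (Xv R G (G.r e)), Xv_mul_self,
        ← mul_assoc, Xv_mul_Xg]
    rw [key]
    exact Submodule.subset_span
      ⟨G.r e, b, G.r e, LPGraph.Path.nil (G.r e), pconcat β e h.1, Xv R G (G.r e),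
        Or.inl ⟨h.2, rfl⟩, rfl⟩
  · rw [← mul_assoc, Xg_mul_mid_zero R G H S hAdm hc e h, zero_mul]
    exact Submodule.zero_mem _

lemma Xg_mul_TSet (hAdm : G.Admissible H S) (e : G.E) {t : LPA R G}
    (ht : t ∈ TSet R G H S) :
    Xg R G e * t ∈ Submodule.span R (TSet R G H S) := by
  obtain ⟨a, b, v, α, β, c, hc, rfl⟩ := ht
  cases α with
  | nil u =>
      simp only [pathE]
      rw [← mul_assoc (Xv R G _) c (pathG R G β), mid_Xv_left R G H S hAdm hc]
      exact Xg_mul_TSet_aux R G H S hAdm e β hc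
  | cons f α' =>
      simp only [pathE, mul_assoc]
      by_cases hef : e = f
      · subst hef
        rw [← mul_assoc, Xg_mul_Xe_same, ← mul_assoc, Xv_mul_pathE]
        exact Submodule.subset_span ⟨G.r e, b, v, α', β, c, hc, rfl⟩
      · rw [← mul_assoc, Xg_mul_Xe_diff R G e f hef, zero_mul]
        exact Submodule.zero_mem _

lemma TSet_mul_Xv (w : G.V) {t : LPA R G} (ht : t ∈ TSet R G H S) :
    t * Xv R G w ∈ Submodule.span R (TSet R G H S) := by
  obtain ⟨a, b, v, α, β, c, hc, rfl⟩ := ht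
  by_cases h : b = w
  · subst h
    simp only [mul_assoc]
    rw [pathG_mul_Xv]
    exact Submodule.subset_span ⟨_, _, _, α, β, c, hc, rfl⟩
  · simp only [mul_assoc]
    rw [pathG_mul_Xv_ne R G β w h, mul_zero, mul_zero]
    exact Submodule.zero_mem _

lemma TSet_mul_Xg (e : G.E) {t : LPA R G} (ht : t ∈ TSet R G H S) :
    t * Xg R G e ∈ Submodule.span R (TSet R G H S) := by
  obtain ⟨a, b, v, α, β, c, hc, rfl⟩ := ht
  by_cases h : b = G.r e
  · subst h
    refine Submodule.subset_span ⟨a, G.s e, v, α, LPGraph.Path.cons e β, c, hc, ?_⟩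
    simp only [pathG, mul_assoc]
  · simp only [mul_assoc]
    rw [pathG_mul_Xg_ne R G β e h, mul_zero, mul_zero]
    exact Submodule.zero_mem _

lemma TSet_mul_Xe (hAdm : G.Admissible H S) (e : G.E) {t : LPA R G}
    (ht : t ∈ TSet R G H S) :
    t * Xe R G e ∈ Submodule.span R (TSet R G H S) := by
  obtain ⟨a, b, v, α, β, c, hc, rfl⟩ := ht
  cases β with
  | nil u =>
      simp only [pathG]
      rw [mid_Xv_right R G H S hAdm hc, mul_assoc]
      by_cases h : G.s e = b ∧ G.r e ∈ H
      · rw [mid_mul_Xe_of_mem R G H S hAdm hc e h.1 h.2]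
        have key : pathE R G α * Xe R G e
            = pathE R G (pconcat α e h.1) *
              (Xv R G (G.r e) * pathG R G (LPGraph.Path.nil (G.r e))) := by
          simp only [pathG]
          rw [pathE_pconcat, Xv_mul_self, mul_assoc, Xe_mul_Xv]
        rw [key]
        exact Submodule.subset_span
          ⟨a, G.r e, G.r e, pconcat α e h.1, LPGraph.Path.nil (G.r e), Xv R G (G.r e),
            Or.inl ⟨h.2, rfl⟩, rfl⟩
      · rw [mid_mul_Xe_zero R G H S hAdm hc e h, mul_zero]
        exact Submodule.zero_mem _
  | cons f β' =>
      simp only [pathG, mul_assoc]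
      by_cases hef : f = e
      · subst hef
        rw [Xg_mul_Xe_same, pathG_mul_Xv]
        exact Submodule.subset_span ⟨a, G.r f, v, α, β', c, hc, rfl⟩
      · rw [Xg_mul_Xe_diff R G f e hef, mul_zero, mul_zero, mul_zero]
        exact Submodule.zero_mem _

lemma mul_left_extend (z : LPA R G)
    (hz : ∀ t ∈ TSet R G H S, z * t ∈ Submodule.span R (TSet R G H S)) :
    ∀ x ∈ Submodule.span R (TSet R G H S), z * x ∈ Submodule.span R (TSet R G H S) := by
  intro x hx
  induction hx using Submodule.span_induction with
  | mem t ht => exact hz t ht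
  | zero => rw [mul_zero]; exact Submodule.zero_mem _
  | add a b _ _ ha hb => rw [mul_add]; exact Submodule.add_mem _ ha hb
  | smul r a _ ha => rw [mul_smul_comm]; exact Submodule.smul_mem _ r ha

lemma mul_right_extend (z : LPA R G)
    (hz : ∀ t ∈ TSet R G H S, t * z ∈ Submodule.span R (TSet R G H S)) :
    ∀ x ∈ Submodule.span R (TSet R G H S), x * z ∈ Submodule.span R (TSet R G H S) := by
  intro x hx
  induction hx using Submodule.span_induction with
  | mem t ht => exact hz t ht
  | zero => rw [zero_mul]; exact Submodule.zero_mem _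
  | add a b _ _ ha hb => rw [add_mul]; exact Submodule.add_mem _ ha hb
  | smul r a _ ha => rw [smul_mul_assoc]; exact Submodule.smul_mem _ r ha

lemma mul_left_span (hAdm : G.Admissible H S) (z : LPA R G) :
    ∀ x ∈ Submodule.span R (TSet R G H S), z * x ∈ Submodule.span R (TSet R G H S) := by
  obtain ⟨z', rfl⟩ := RingQuot.mkAlgHom_surjective R (LRel R G) z
  induction z' using FreeAlgebra.induction with
  | grade0 r =>
      intro x hx
      rw [AlgHom.commutes, ← Algebra.smul_def]
      exact Submodule.smul_mem _ r hx
  | grade1 g =>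
      cases g with
      | vertex w =>
          exact mul_left_extend R G H S _ fun t ht => Xv_mul_TSet R G H S w ht
      | edge e =>
          exact mul_left_extend R G H S _ fun t ht => Xe_mul_TSet R G H S e ht
      | ghost e =>
          exact mul_left_extend R G H S _ fun t ht => Xg_mul_TSet R G H S hAdm e ht
  | mul p q ihp ihq =>
      intro x hx
      rw [map_mul, mul_assoc]
      exact ihp _ (ihq x hx)
  | add p q ihp ihq =>
      intro x hx
      rw [map_add, add_mul]
      exact Submodule.add_mem _ (ihp x hx) (ihq x hx)

lemma mul_right_span (hAdm : G.Admissible H S) (z : LPA R G) :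
    ∀ x ∈ Submodule.span R (TSet R G H S), x * z ∈ Submodule.span R (TSet R G H S) := by
  obtain ⟨z', rfl⟩ := RingQuot.mkAlgHom_surjective R (LRel R G) z
  induction z' using FreeAlgebra.induction with
  | grade0 r =>
      intro x hx
      rw [AlgHom.commutes, ← Algebra.commutes, ← Algebra.smul_def]
      exact Submodule.smul_mem _ r hx
  | grade1 g =>
      cases g with
      | vertex w =>
          exact mul_right_extend R G H S _ fun t ht => TSet_mul_Xv R G H S w ht
      | edge e =>
          exact mul_right_extend R G H S _ fun t ht => TSet_mul_Xe R G H S hAdm e ht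
      | ghost e =>
          exact mul_right_extend R G H S _ fun t ht => TSet_mul_Xg R G H S e ht
  | mul p q ihp ihq =>
      intro x hx
      rw [map_mul, ← mul_assoc]
      exact ihq _ (ihp x hx)
  | add p q ihp ihq =>
      intro x hx
      rw [map_add, mul_add]
      exact Submodule.add_mem _ (ihp x hx) (ihq x hx)

lemma IHS_le_span (hAdm : G.Admissible H S) :
    ∀ x ∈ IHS R G H S, x ∈ Submodule.span R (TSet R G H S) := by
  intro x hx
  have key : x ∈ TwoSidedIdeal.mk' (Submodule.span R (TSet R G H S) : Set (LPA R G))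
      (Submodule.zero_mem _)
      (fun h1 h2 => Submodule.add_mem _ h1 h2)
      (fun h1 => Submodule.neg_mem _ h1)
      (fun {z y} h1 => mul_left_span R G H S hAdm z y h1)
      (fun {y z} h1 => mul_right_span R G H S hAdm z y h1) := by
    refine TwoSidedIdeal.mem_span_iff.mp hx _ ?_
    rintro _ (⟨v, hv, rfl⟩ | ⟨v, hv, rfl⟩)
    · simp only [SetLike.mem_coe, TwoSidedIdeal.mem_mk']
      refine Submodule.subset_span
        ⟨v, v, v, LPGraph.Path.nil v, LPGraph.Path.nil v, Xv R G v, Or.inl ⟨hv, rfl⟩, ?_⟩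
      show Xv R G v = Xv R G v * (Xv R G v * Xv R G v)
      rw [Xv_mul_self, Xv_mul_self]
    · simp only [SetLike.mem_coe, TwoSidedIdeal.mem_mk']
      refine Submodule.subset_span
        ⟨v, v, v, LPGraph.Path.nil v, LPGraph.Path.nil v, vH R G H v, Or.inr ⟨hv, rfl⟩, ?_⟩
      show vH R G H v = Xv R G v * (vH R G H v * Xv R G v)
      rw [vH_mul_Xv R G H ((hAdm.2.2 hv).2.2.1), Xv_mul_vH R G H ((hAdm.2.2 hv).2.2.1)]
  rw [TwoSidedIdeal.mem_mk'] at key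
  exact key

end SpanAux
section JoinAux

variable (R : Type) [CommRing R] (G : LPGraph) (H S : Set G.V)

noncomputable def joinList : List (LPA R G) → LPA R G
  | [] => 0
  | x :: l => x + joinList l - x * joinList l

lemma joinList_mem_IHS (l : List (LPA R G)) (hl : ∀ x ∈ l, x ∈ IHS R G H S) :
    joinList R G l ∈ IHS R G H S := by
  induction l with
  | nil => exact TwoSidedIdeal.zero_mem _
  | cons y l ih =>
      have hy := hl y List.mem_cons_self
      have hrest := ih fun x hx => hl x (List.mem_cons_of_mem y hx)
      exact TwoSidedIdeal.sub_mem _ (TwoSidedIdeal.add_mem _ hy hrest)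
        (TwoSidedIdeal.mul_mem_left _ _ _ hrest)

lemma joinList_commute (l : List (LPA R G)) (z : LPA R G)
    (hl : ∀ x ∈ l, Commute x z) : Commute (joinList R G l) z := by
  induction l with
  | nil => exact Commute.zero_left z
  | cons y l ih =>
      have hy := hl y List.mem_cons_self
      have hrest := ih fun x hx => hl x (List.mem_cons_of_mem y hx)
      exact (hy.add_left hrest).sub_left (hy.mul_left hrest)

lemma join2_idem (x u : LPA R G) (hx : x * x = x) (hu : u * u = u)
    (hc : x * u = u * x) :
    (x + u - x * u) * (x + u - x * u) = x + u - x * u := by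
  have h2 : x * u * x = x * u := by rw [mul_assoc, ← hc, ← mul_assoc, hx]
  have h3 : u * (x * u) = x * u := by rw [← mul_assoc, ← hc, mul_assoc, hu]
  have h4 : x * u * (x * u) = x * u := by rw [mul_assoc x u, h3, ← mul_assoc, hx]
  have h5 : u * x * u = x * u := by rw [← hc, mul_assoc, hu]
  have h6 : x * (x * u) = x * u := by rw [← mul_assoc, hx]
  have h7 : x * u * u = x * u := by rw [mul_assoc, hu]
  simp only [sub_mul, mul_sub, add_mul, mul_add, hx, hu, h2, h3, h4, h5, h6, h7, ← hc]
  abel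

lemma joinList_idem (hAdm : G.Admissible H S) (l : List (LPA R G))
    (hl : ∀ x ∈ l, x ∈ EFam R G H S) :
    joinList R G l * joinList R G l = joinList R G l := by
  induction l with
  | nil => exact mul_zero 0
  | cons y l ih =>
      have hy := hl y List.mem_cons_self
      have hrest : ∀ x ∈ l, x ∈ EFam R G H S :=
        fun x hx => hl x (List.mem_cons_of_mem y hx)
      have hcom : Commute y (joinList R G l) :=
        (joinList_commute R G l y fun x hx =>
          efam_commute R G H S hAdm (hrest x hx) hy).symm
      exact join2_idem R G y (joinList R G l) (efam_idem R G H S hAdm hy)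
        (ih hrest) hcom.eq

lemma joinList_absorb (hAdm : G.Admissible H S) (l : List (LPA R G))
    (hl : ∀ x ∈ l, x ∈ EFam R G H S) {x : LPA R G} (hx : x ∈ l) :
    joinList R G l * x = x ∧ x * joinList R G l = x := by
  induction l with
  | nil => cases hx
  | cons y l ih =>
      have hy := hl y List.mem_cons_self
      have hrest : ∀ z ∈ l, z ∈ EFam R G H S :=
        fun z hz => hl z (List.mem_cons_of_mem y hz)
      have hyy : y * y = y := efam_idem R G H S hAdm hy
      rcases List.mem_cons.mp hx with rfl | hx'
      · have hcom : x * joinList R G l = joinList R G l * x :=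
          ((joinList_commute R G l x fun z hz =>
            efam_commute R G H S hAdm (hrest z hz) hy).symm).eq
        constructor
        · show (x + joinList R G l - x * joinList R G l) * x = x
          rw [sub_mul, add_mul, hyy, hcom, mul_assoc, hyy, add_sub_cancel_right]
        · show x * (x + joinList R G l - x * joinList R G l) = x
          rw [mul_sub, mul_add, hyy, ← mul_assoc, hyy, add_sub_cancel_right]
      · obtain ⟨hux, hxu⟩ := ih hrest hx'
        have hxy : x * y = y * x :=
          (efam_commute R G H S hAdm (hrest x hx') hy).eq
        constructor
        · show (y + joinList R G l - y * joinList R G l) * x = x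
          rw [sub_mul, add_mul, hux, mul_assoc, hux, add_sub_cancel_left]
        · show x * (y + joinList R G l - y * joinList R G l) = x
          have h3 : x * (y * joinList R G l) = y * x := by
            rw [← mul_assoc, hxy, mul_assoc, hxu]
          rw [mul_sub, mul_add, hxu, h3, hxy, add_sub_cancel_left]

lemma joinList_unit_left (l : List (LPA R G)) (w : LPA R G)
    (hw : ∀ x ∈ l, w * x = x) : w * joinList R G l = joinList R G l := by
  induction l with
  | nil => exact mul_zero w
  | cons y l ih =>
      have hy := hw y List.mem_cons_self
      have hrest := ih fun x hx => hw x (List.mem_cons_of_mem y hx)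
      show w * (y + joinList R G l - y * joinList R G l) = _
      rw [mul_sub, mul_add, hy, hrest, ← mul_assoc, hy]
      rfl

lemma joinList_unit_right (l : List (LPA R G)) (w : LPA R G)
    (hw : ∀ x ∈ l, x * w = x) : joinList R G l * w = joinList R G l := by
  induction l with
  | nil => exact zero_mul w
  | cons y l ih =>
      have hy := hw y List.mem_cons_self
      have hrest := ih fun x hx => hw x (List.mem_cons_of_mem y hx)
      show (y + joinList R G l - y * joinList R G l) * w = _
      rw [sub_mul, add_mul, hy, hrest, mul_assoc, hrest]
      rfl

end JoinAux
/-- The ideal `I(H,S)` is a ring with a set of local units. -/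
theorem IHS_local_units (G : LPGraph) (R : Type) [CommRing R] (H S : Set G.V)
    (hAdm : G.Admissible H S) :
    ∃ U : Set (LPA R G),
      (∀ u ∈ U, u ∈ IHS R G H S ∧ IsIdempotentElem u) ∧
      (∀ u ∈ U, ∀ u' ∈ U, u * u' = u' * u) ∧
      (∀ x ∈ IHS R G H S, ∃ u ∈ U, u * x = x ∧ x * u = x) := by
  classical
  refine ⟨{u | ∃ l : List (LPA R G), (∀ x ∈ l, x ∈ EFam R G H S) ∧ u = joinList R G l},
    ?_, ?_, ?_⟩
  · rintro u ⟨l, hl, rfl⟩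
    exact ⟨joinList_mem_IHS R G H S l fun x hx => efam_mem_IHS R G H S (hl x hx),
      joinList_idem R G H S hAdm l hl⟩
  · rintro u ⟨l, hl, rfl⟩ u' ⟨l', hl', rfl⟩
    exact (joinList_commute R G l (joinList R G l') fun x hx =>
      (joinList_commute R G l' x fun y hy =>
        efam_commute R G H S hAdm (hl' y hy) (hl x hx)).symm).eq
  · intro x hx
    have hx' := IHS_le_span R G H S hAdm x hx
    clear hx
    induction hx' using Submodule.span_induction with
    | mem t ht =>
        obtain ⟨a, b, v, α, β, c, hc, rfl⟩ := ht
        have hl : ∀ z ∈ [eGamma R G α c, eGamma R G β c], z ∈ EFam R G H S := by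
          intro z hz
          simp only [List.mem_cons, List.not_mem_nil, or_false] at hz
          rcases hz with rfl | rfl
          · exact ⟨a, v, α, c, hc, rfl⟩
          · exact ⟨b, v, β, c, hc, rfl⟩
        refine ⟨joinList R G [eGamma R G α c, eGamma R G β c],
          ⟨[eGamma R G α c, eGamma R G β c], hl, rfl⟩, ?_, ?_⟩
        · have h1 := (joinList_absorb R G H S hAdm _ hl
            List.mem_cons_self).1
          rw [← eGamma_absorb_left R G H S hAdm α β hc, ← mul_assoc, h1]
        · have h2 := (joinList_absorb R G H S hAdm _ hl
            (by simp : eGamma R G β c ∈ [eGamma R G α c, eGamma R G β c])).2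
          rw [← eGamma_absorb_right R G H S hAdm α β hc, mul_assoc, h2]
    | zero =>
        exact ⟨joinList R G [], ⟨[], fun z hz => absurd hz (List.not_mem_nil (a := z)), rfl⟩,
          mul_zero _, zero_mul _⟩
    | add p q hp hq ihp ihq =>
        obtain ⟨u, ⟨l, hl, rfl⟩, hu1, hu2⟩ := ihp
        obtain ⟨u', ⟨l', hl', rfl⟩, hv1, hv2⟩ := ihq
        have hall : ∀ z ∈ l ++ l', z ∈ EFam R G H S := fun z hz =>
          (List.mem_append.mp hz).elim (hl z) (hl' z)
        have hLl : joinList R G (l ++ l') * joinList R G l = joinList R G l :=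
          joinList_unit_left R G l _ fun z hz =>
            (joinList_absorb R G H S hAdm (l ++ l') hall (List.mem_append_left l' hz)).1
        have hLl' : joinList R G (l ++ l') * joinList R G l' = joinList R G l' :=
          joinList_unit_left R G l' _ fun z hz =>
            (joinList_absorb R G H S hAdm (l ++ l') hall (List.mem_append_right l hz)).1
        have hRl : joinList R G l * joinList R G (l ++ l') = joinList R G l :=
          joinList_unit_right R G l _ fun z hz =>
            (joinList_absorb R G H S hAdm (l ++ l') hall (List.mem_append_left l' hz)).2
        have hRl' : joinList R G l' * joinList R G (l ++ l') = joinList R G l' :=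
          joinList_unit_right R G l' _ fun z hz =>
            (joinList_absorb R G H S hAdm (l ++ l') hall (List.mem_append_right l hz)).2
        refine ⟨joinList R G (l ++ l'), ⟨l ++ l', hall, rfl⟩, ?_, ?_⟩
        · rw [mul_add, show joinList R G (l ++ l') * p = p from by
            rw [← hu1, ← mul_assoc, hLl], show joinList R G (l ++ l') * q = q from by
            rw [← hv1, ← mul_assoc, hLl']]
        · rw [add_mul, show p * joinList R G (l ++ l') = p from by
            rw [← hu2, mul_assoc, hRl], show q * joinList R G (l ++ l') = q from by
            rw [← hv2, mul_assoc, hRl']]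
    | smul r p hp ihp =>
        obtain ⟨u, hu, h1, h2⟩ := ihp
        exact ⟨u, hu, by rw [mul_smul_comm, h1], by rw [smul_mul_assoc, h2]⟩
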